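/- For every d ≥ 3 and s, t, u > 0, the d-simplex A_d(s,t,u) with squared edge lengths ‖p_1−p_2‖² = ‖p_1−p_j‖² = s+t+u (4 ≤ j ≤ d+1), ‖p_1−p_3‖² = s+u, ‖p_i−p_j‖² = s+t (2 ≤ i < j ≤ d+1), is diameter-Ramsey. -/

import Mathlib

open Function

section Aux

private lemma pigeonFin (k : ℕ) (C : Type*) [Fintype C] [DecidableEq C] :
    ∃ n, 2 ≤ n ∧ ∀ f : Fin n → C, ∃ g : Fin k → Fin n,
      Injective g ∧ ∀ i j, f (g i) = f (g j) := by
  refine ⟨Fintype.card C * k + 2, by omega, fun f => ?_⟩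
  have hcard : (Finset.univ : Finset C).card * k
      < (Finset.univ : Finset (Fin (Fintype.card C * k + 2))).card := by
    simp [Finset.card_univ]
  obtain ⟨c, -, hc⟩ := Finset.exists_lt_card_fiber_of_mul_lt_card_of_maps_to
    (fun a _ => Finset.mem_univ (f a)) hcard
  obtain ⟨B, hBsub, hBcard⟩ := Finset.exists_subset_card_eq (le_of_lt hc)
  refine ⟨fun i => (B.orderIsoOfFin hBcard i : Fin _), ?_, ?_⟩
  · intro i j hij
    exact (B.orderIsoOfFin hBcard).injective (Subtype.ext hij)
  · intro i j
    have h1 : ∀ i : Fin k, f ((B.orderIsoOfFin hBcard i : Fin _)) = c := by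
      intro i
      have := hBsub (B.orderIsoOfFin hBcard i).2
      simpa using (Finset.mem_filter.mp this).2
    rw [h1, h1]

private lemma monoBox (q : ℕ) (hq : 0 < q) (k1 k2 k3 : ℕ) (hk2 : 0 < k2) (hk3 : 0 < k3) :
    ∃ n1 n2 n3 : ℕ, 2 ≤ n1 ∧ 2 ≤ n2 ∧ 2 ≤ n3 ∧
    ∀ χ : Fin n1 × Fin n2 × Fin n3 → Fin q,
      ∃ (g1 : Fin k1 → Fin n1) (g2 : Fin k2 → Fin n2) (g3 : Fin k3 → Fin n3),
        Injective g1 ∧ Injective g2 ∧ Injective g3 ∧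
        ∀ i i' j j' l l', χ (g1 i, g2 j, g3 l) = χ (g1 i', g2 j', g3 l') := by
  haveI : NeZero q := ⟨hq.ne'⟩
  obtain ⟨n1, hn1, H1⟩ := pigeonFin k1 (Fin q)
  obtain ⟨n2, hn2, H2⟩ := pigeonFin k2 (Fin n1 → Fin q)
  obtain ⟨n3, hn3, H3⟩ := pigeonFin k3 (Fin n1 × Fin n2 → Fin q)
  refine ⟨n1, n2, n3, hn1, hn2, hn3, fun χ => ?_⟩
  obtain ⟨g3, hg3, hm3⟩ := H3 (fun c => fun ab => χ (ab.1, ab.2, c))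
  have l0 : Fin k3 := ⟨0, hk3⟩
  obtain ⟨g2, hg2, hm2⟩ := H2 (fun b => fun a => χ (a, b, g3 l0))
  have j0 : Fin k2 := ⟨0, hk2⟩
  obtain ⟨g1, hg1, hm1⟩ := H1 (fun a => χ (a, g2 j0, g3 l0))
  have key : ∀ i j l, χ (g1 i, g2 j, g3 l) = χ (g1 i, g2 j0, g3 l0) := by
    intro i j l
    have e3 : χ (g1 i, g2 j, g3 l) = χ (g1 i, g2 j, g3 l0) :=
      congrFun (hm3 l l0) (g1 i, g2 j)
    have e2 : χ (g1 i, g2 j, g3 l0) = χ (g1 i, g2 j0, g3 l0) :=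
      congrFun (hm2 j j0) (g1 i)
    rw [e3, e2]
  exact ⟨g1, g2, g3, hg1, hg2, hg3, fun i i' j j' l l' => by
    rw [key i j l, key i' j' l', hm1 i i']⟩

private lemma indSum {n : ℕ} (α : ℝ) (a a' : Fin n) :
    ∑ k, ((if k = a then α else 0) - (if k = a' then α else 0))^2
      = if a = a' then 0 else 2*α^2 := by
  by_cases h : a = a'
  · simp [h]
  · rw [if_neg h]
    have step : ∀ k : Fin n, ((if k = a then α else 0) - (if k = a' then α else 0))^2
        = (if k = a then α^2 else 0) + (if k = a' then α^2 else 0) := by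
      intro k
      split_ifs with h1 h2 h2
      · exact absurd (h1 ▸ h2) h
      · ring
      · ring
      · ring
    rw [Finset.sum_congr rfl (fun k _ => step k), Finset.sum_add_distrib]
    simp
    ring

/-- A point of the product-of-three-simplices configuration. -/
private def pt {n1 n2 n3 : ℕ} (α β γ : ℝ) (v : Fin n1 × Fin n2 × Fin n3) :
    EuclideanSpace ℝ (Fin n1 ⊕ Fin n2 ⊕ Fin n3) :=
  WithLp.toLp 2 (Sum.elim (fun a => if a = v.1 then α else 0)
    (Sum.elim (fun b => if b = v.2.1 then β else 0)
      (fun c => if c = v.2.2 then γ else 0)))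

private lemma pt_dist {n1 n2 n3 : ℕ} (α β γ : ℝ) (v w : Fin n1 × Fin n2 × Fin n3) :
    dist (pt α β γ v) (pt α β γ w)
      = Real.sqrt ((if v.1 = w.1 then 0 else 2*α^2)
          + ((if v.2.1 = w.2.1 then 0 else 2*β^2) + (if v.2.2 = w.2.2 then 0 else 2*γ^2))) := by
  rw [EuclideanSpace.dist_eq]
  congr 1
  have hco : ∀ i, dist (pt α β γ v i) (pt α β γ w i) ^ 2
      = (pt α β γ v i - pt α β γ w i)^2 := by
    intro i; rw [Real.dist_eq, sq_abs]
  rw [Finset.sum_congr rfl (fun i _ => hco i)]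
  rw [Fintype.sum_sum_type, Fintype.sum_sum_type]
  rw [show (∑ a : Fin n1, (pt α β γ v (Sum.inl a) - pt α β γ w (Sum.inl a))^2)
      = ∑ a : Fin n1, ((if a = v.1 then α else 0) - (if a = w.1 then α else 0))^2 from rfl]
  rw [show (∑ b : Fin n2, (pt α β γ v (Sum.inr (Sum.inl b)) - pt α β γ w (Sum.inr (Sum.inl b)))^2)
      = ∑ b : Fin n2, ((if b = v.2.1 then β else 0) - (if b = w.2.1 then β else 0))^2 from rfl]
  rw [show (∑ c : Fin n3, (pt α β γ v (Sum.inr (Sum.inr c)) - pt α β γ w (Sum.inr (Sum.inr c)))^2)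
      = ∑ c : Fin n3, ((if c = v.2.2 then γ else 0) - (if c = w.2.2 then γ else 0))^2 from rfl]
  rw [indSum, indSum, indSum]

/-- The index map collapsing `2` to `0`. -/
private def sig2 {n : ℕ} (i : Fin n) : Fin n := if (i : ℕ) = 2 then ⟨0, i.pos⟩ else i
/-- The index map separating `0` from the rest. -/
private def sig3 {n : ℕ} (i : Fin n) : Fin 2 := if (i : ℕ) = 0 then 0 else 1

private lemma sig2_eq_iff {n : ℕ} (i j : Fin n) :
    sig2 i = sig2 j ↔ ((i:ℕ) = j ∨ ((i:ℕ) = 0 ∧ (j:ℕ) = 2) ∨ ((i:ℕ) = 2 ∧ (j:ℕ) = 0)) := by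
  unfold sig2
  split_ifs with h1 h2 h2 <;> simp [Fin.ext_iff] <;> omega

private lemma sig3_eq_iff {n : ℕ} (i j : Fin n) :
    sig3 i = sig3 j ↔ ((i:ℕ) = 0 ↔ (j:ℕ) = 0) := by
  unfold sig3
  split_ifs with h1 h2 h2 <;> simp [h1, h2]

/-- The squared-distance pattern of the simplex `A_d(s,t,u)`. -/
private def Tv (s t u : ℝ) {n : ℕ} (i j : Fin n) : ℝ :=
  (if i = j then 0 else s)
    + ((if sig2 i = sig2 j then 0 else t) + (if sig3 i = sig3 j then 0 else u))

private lemma Tv_symm (s t u : ℝ) {n : ℕ} (i j : Fin n) : Tv s t u i j = Tv s t u j i := by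
  unfold Tv
  rw [if_congr (eq_comm (a := i) (b := j)) rfl rfl,
      if_congr (eq_comm (a := sig2 i) (b := sig2 j)) rfl rfl,
      if_congr (eq_comm (a := sig3 i) (b := sig3 j)) rfl rfl]

private lemma Tv_le {s t u : ℝ} (hs : 0 ≤ s) (ht : 0 ≤ t) (hu : 0 ≤ u) {n : ℕ} (i j : Fin n) :
    Tv s t u i j ≤ s + t + u := by
  unfold Tv; split_ifs <;> linarith

end Aux

/-- A finite set `A ⊆ ℝ^m` is diameter-Ramsey. -/
def IsDiamRamsey {m : ℕ} (A : Set (EuclideanSpace ℝ (Fin m))) : Prop :=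
  ∀ q : ℕ, 0 < q → ∃ (N : ℕ) (R : Set (EuclideanSpace ℝ (Fin N))), R.Finite ∧
    Metric.diam R = Metric.diam A ∧
    ∀ χ : EuclideanSpace ℝ (Fin N) → Fin q, ∃ S : Set (EuclideanSpace ℝ (Fin N)),
      S ⊆ R ∧ (∀ x ∈ S, ∀ y ∈ S, χ x = χ y) ∧
      ∃ f : EuclideanSpace ℝ (Fin N) → EuclideanSpace ℝ (Fin m),
        f '' S = A ∧ ∀ x ∈ S, ∀ y ∈ S, dist (f x) (f y) = dist x y

/-- the simplex `A_d(s,t,u)` is diameter-Ramsey. Vertex `0` plays the role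
of `p₁`, vertex `1` of `p₂`, vertex `2` of `p₃`. -/
theorem stmt7 (d : ℕ) (hd : 3 ≤ d) (s t u : ℝ) (hs : 0 < s) (ht : 0 < t) (hu : 0 < u)
    {N : ℕ} (p : Fin (d + 1) → EuclideanSpace ℝ (Fin N))
    (hind : AffineIndependent ℝ p)
    (h12 : dist (p 0) (p 1) ^ 2 = s + t + u)
    (h1j : ∀ j : Fin (d + 1), 3 ≤ (j : ℕ) → dist (p 0) (p j) ^ 2 = s + t + u)
    (h13 : dist (p 0) (p 2) ^ 2 = s + u)
    (hij : ∀ i j : Fin (d + 1), 1 ≤ (i : ℕ) → i < j → dist (p i) (p j) ^ 2 = s + t) :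
    IsDiamRamsey (Set.range p) := by
  -- distances of `p` realize the pattern `Tv`
  have hpd : ∀ i j : Fin (d+1), dist (p i) (p j) = Real.sqrt (Tv s t u i j) := by
    have key : ∀ i j : Fin (d+1), (i:ℕ) < (j:ℕ) →
        dist (p i) (p j) = Real.sqrt (Tv s t u i j) := by
      intro i j hlt
      have hne : ¬ (i = j) := by simp only [Fin.ext_iff]; omega
      have hsq : ∀ E : ℝ, dist (p i) (p j) ^ 2 = E → dist (p i) (p j) = Real.sqrt E := by
        intro E hE
        have := congrArg Real.sqrt hE
        rwa [Real.sqrt_sq dist_nonneg] at this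
      by_cases h0 : (i:ℕ) = 0
      · have hi : i = 0 := Fin.ext (by simpa using h0)
        rcases Nat.lt_or_ge (j:ℕ) 3 with hj3 | hj3
        · have : (j:ℕ) = 1 ∨ (j:ℕ) = 2 := by omega
          rcases this with hj | hj
          · -- pair (0,1): distance √(s+t+u)
            have hj' : j = 1 := Fin.ext (by
              show (j:ℕ) = 1 % (d+1); rw [Nat.mod_eq_of_lt (by omega)]; exact hj)
            have hT : Tv s t u i j = s + t + u := by
              unfold Tv
              rw [if_neg hne, if_neg (by rw [sig2_eq_iff]; omega),
                  if_neg (by rw [sig3_eq_iff]; omega)]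
              ring
            rw [hT]
            exact hsq _ (by rw [hi, hj']; exact h12)
          · -- pair (0,2): distance √(s+u)
            have hj' : j = 2 := Fin.ext (by
              show (j:ℕ) = 2 % (d+1); rw [Nat.mod_eq_of_lt (by omega)]; exact hj)
            have hT : Tv s t u i j = s + u := by
              unfold Tv
              rw [if_neg hne, if_pos (by rw [sig2_eq_iff]; omega),
                  if_neg (by rw [sig3_eq_iff]; omega)]
              ring
            rw [hT]
            exact hsq _ (by rw [hi, hj']; exact h13)
        · -- pair (0,j), j ≥ 3: distance √(s+t+u)
          have hT : Tv s t u i j = s + t + u := by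
            unfold Tv
            rw [if_neg hne, if_neg (by rw [sig2_eq_iff]; omega),
                if_neg (by rw [sig3_eq_iff]; omega)]
            ring
          rw [hT]
          exact hsq _ (by rw [hi]; exact h1j j hj3)
      · -- pair (i,j) with 1 ≤ i < j: distance √(s+t)
        have hT : Tv s t u i j = s + t := by
          unfold Tv
          rw [if_neg hne, if_neg (by rw [sig2_eq_iff]; omega),
              if_pos (by rw [sig3_eq_iff]; omega)]
          ring
        rw [hT]
        exact hsq _ (hij i j (by omega) (by rw [Fin.lt_def]; exact hlt))
    intro i j
    rcases Nat.lt_trichotomy (i:ℕ) (j:ℕ) with h | h | h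
    · exact key i j h
    · have hij' : i = j := Fin.ext h
      subst hij'
      rw [dist_self]
      have : Tv s t u i i = 0 := by unfold Tv; simp
      rw [this, Real.sqrt_zero]
    · rw [dist_comm, key j i h]
      exact congrArg Real.sqrt (Tv_symm s t u j i)
  -- diameter of `A`
  have hdiamA : Metric.diam (Set.range p) = Real.sqrt (s+t+u) := by
    apply le_antisymm
    · apply Metric.diam_le_of_forall_dist_le (Real.sqrt_nonneg _)
      rintro x ⟨i, rfl⟩ y ⟨j, rfl⟩
      rw [hpd]
      exact Real.sqrt_le_sqrt (Tv_le hs.le ht.le hu.le i j)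
    · have h01 : dist (p 0) (p 1) = Real.sqrt (s+t+u) := by
        have := congrArg Real.sqrt h12
        rwa [Real.sqrt_sq dist_nonneg] at this
      rw [← h01]
      exact Metric.dist_le_diam_of_mem ((Set.finite_range p).isBounded) ⟨0, rfl⟩ ⟨1, rfl⟩
  intro q hq
  obtain ⟨n1, n2, n3, hn1, hn2, hn3, HB⟩ := monoBox q hq (d+1) (d+1) 2 (by omega) (by omega)
  -- the ambient configuration
  set M := Fintype.card (Fin n1 ⊕ Fin n2 ⊕ Fin n3) with hM
  let Φ : EuclideanSpace ℝ (Fin n1 ⊕ Fin n2 ⊕ Fin n3) ≃ₗᵢ[ℝ] EuclideanSpace ℝ (Fin M) :=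
    LinearIsometryEquiv.piLpCongrLeft 2 ℝ ℝ (Fintype.equivFin _)
  have hα : 2 * (Real.sqrt (s/2))^2 = s := by rw [Real.sq_sqrt (by linarith)]; ring
  have hβ : 2 * (Real.sqrt (t/2))^2 = t := by rw [Real.sq_sqrt (by linarith)]; ring
  have hγ : 2 * (Real.sqrt (u/2))^2 = u := by rw [Real.sq_sqrt (by linarith)]; ring
  set Pf : Fin n1 × Fin n2 × Fin n3 → EuclideanSpace ℝ (Fin M) :=
    fun v => Φ (pt (Real.sqrt (s/2)) (Real.sqrt (t/2)) (Real.sqrt (u/2)) v) with hPfdef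
  have hPf : ∀ v w, dist (Pf v) (Pf w)
      = Real.sqrt ((if v.1 = w.1 then 0 else s)
          + ((if v.2.1 = w.2.1 then 0 else t) + (if v.2.2 = w.2.2 then 0 else u))) := by
    intro v w
    rw [hPfdef]
    simp only
    rw [Φ.dist_map, pt_dist, hα, hβ, hγ]
  refine ⟨M, Set.range Pf, Set.finite_range _, ?_, ?_⟩
  · -- diameters agree
    rw [hdiamA]
    apply le_antisymm
    · apply Metric.diam_le_of_forall_dist_le (Real.sqrt_nonneg _)
      rintro x ⟨v, rfl⟩ y ⟨w, rfl⟩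
      rw [hPf]
      apply Real.sqrt_le_sqrt
      split_ifs <;> linarith
    · have hne1 : (⟨0, by omega⟩ : Fin n1) ≠ ⟨1, by omega⟩ := by simp
      have hne2 : (⟨0, by omega⟩ : Fin n2) ≠ ⟨1, by omega⟩ := by simp
      have hne3 : (⟨0, by omega⟩ : Fin n3) ≠ ⟨1, by omega⟩ := by simp
      have hd12 : dist (Pf (⟨0, by omega⟩, ⟨0, by omega⟩, ⟨0, by omega⟩))
          (Pf (⟨1, by omega⟩, ⟨1, by omega⟩, ⟨1, by omega⟩)) = Real.sqrt (s+t+u) := by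
        rw [hPf, if_neg hne1, if_neg hne2, if_neg hne3]
        ring_nf
      rw [← hd12]
      exact Metric.dist_le_diam_of_mem ((Set.finite_range Pf).isBounded) ⟨_, rfl⟩ ⟨_, rfl⟩
  · -- the Ramsey property
    intro χ
    obtain ⟨g1, g2, g3, hg1, hg2, hg3, hmono⟩ := HB (fun v => χ (Pf v))
    set ψ : Fin (d+1) → EuclideanSpace ℝ (Fin M) :=
      fun i => Pf (g1 i, g2 (sig2 i), g3 (sig3 i)) with hψdef
    have hψd : ∀ i j, dist (ψ i) (ψ j) = Real.sqrt (Tv s t u i j) := by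
      intro i j
      rw [hψdef]
      simp only
      rw [hPf]
      unfold Tv
      simp only [hg1.eq_iff, hg2.eq_iff, hg3.eq_iff]
    have hψinj : Injective ψ := by
      intro i j hEq
      by_contra hne
      have h0 : dist (ψ i) (ψ j) = 0 := by rw [hEq, dist_self]
      rw [hψd] at h0
      have hpos : 0 < Tv s t u i j := by
        unfold Tv
        rw [if_neg hne]
        split_ifs <;> linarith
      have := Real.sqrt_pos.mpr hpos
      linarith
    have hmatch : ∀ i j, dist (ψ i) (ψ j) = dist (p i) (p j) := by
      intro i j; rw [hψd, hpd]
    refine ⟨Set.range ψ, ?_, ?_, ?_⟩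
    · rintro x ⟨i, rfl⟩
      exact ⟨_, rfl⟩
    · rintro x ⟨i, rfl⟩ y ⟨j, rfl⟩
      exact hmono i j (sig2 i) (sig2 j) (sig3 i) (sig3 j)
    · refine ⟨Function.extend ψ p (fun _ => p 0), ?_, ?_⟩
      · have hcomp : (Function.extend ψ p (fun _ => p 0)) ∘ ψ = p :=
          funext (fun i => hψinj.extend_apply p _ i)
        rw [← Set.range_comp, hcomp]
      · rintro x ⟨i, rfl⟩ y ⟨j, rfl⟩
        rw [hψinj.extend_apply, hψinj.extend_apply, hmatch]
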